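/- Let q₀ and γ be real numbers with 0 < q₀ ≤ γ ≤ 1/2. Then γ·log(γ/q₀) + (1 − γ)·log((1 − γ)/(1 − q₀)) ≤ (γ − q₀)² / (2·q₀·(1 − q₀)); that is, on the interval (q₀, 1/2] the binary KL divergence Φ(γ) is bounded above by its second-order Taylor polynomial expanded at q₀. -/

import Mathlib

open Real Set

private lemma kl_hasDerivAt_G (q₀ : ℝ) (h0 : 0 < q₀) (hq : q₀ < 1) {x : ℝ}
    (hx0 : 0 < x) (hx1 : x < 1) :
    HasDerivAt (fun y : ℝ => (y - q₀) / (q₀ * (1 - q₀)) -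
        (Real.log y - Real.log q₀ + Real.log (1 - q₀) - Real.log (1 - y)))
      ((q₀ * (1 - q₀))⁻¹ - (x⁻¹ + (1 - x)⁻¹)) x := by
  have hA : HasDerivAt (fun y : ℝ => (y - q₀) / (q₀ * (1 - q₀))) ((q₀ * (1 - q₀))⁻¹) x := by
    simpa [one_div] using ((hasDerivAt_id x).sub_const q₀).div_const (q₀ * (1 - q₀))
  have h2 : HasDerivAt Real.log x⁻¹ x := Real.hasDerivAt_log (ne_of_gt hx0)
  have hlin : HasDerivAt (fun y : ℝ => 1 - y) (-1) x := by
    exact (hasDerivAt_id' x).const_sub (1:ℝ)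
  have h3 : HasDerivAt (fun y : ℝ => Real.log (1 - y)) (-(1 - x)⁻¹) x := by
    have h1x : (1 : ℝ) - x ≠ 0 := by linarith
    have := (Real.hasDerivAt_log h1x).comp x hlin
    refine this.congr_deriv ?_
    ring
  have := hA.sub (((h2.sub_const (Real.log q₀)).add_const (Real.log (1 - q₀))).sub h3)
  refine this.congr_deriv ?_
  ring

private lemma kl_deriv_bound (q₀ : ℝ) (h0 : 0 < q₀) (hq : q₀ ≤ 1 / 2) :
    ∀ x ∈ Set.Icc q₀ (1/2 : ℝ),
      Real.log x - Real.log q₀ + Real.log (1 - q₀) - Real.log (1 - x)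
        ≤ (x - q₀) / (q₀ * (1 - q₀)) := by
  have hq1 : q₀ < 1 := by linarith
  set G : ℝ → ℝ := fun y => (y - q₀) / (q₀ * (1 - q₀)) -
      (Real.log y - Real.log q₀ + Real.log (1 - q₀) - Real.log (1 - y)) with hG
  have mono : MonotoneOn G (Set.Icc q₀ (1/2 : ℝ)) := by
    apply monotoneOn_of_deriv_nonneg (convex_Icc _ _)
    · intro x hx
      have hx0 : 0 < x := lt_of_lt_of_le h0 hx.1
      have hx1 : x < 1 := by have := hx.2; linarith
      exact (kl_hasDerivAt_G q₀ h0 hq1 hx0 hx1).continuousAt.continuousWithinAt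
    · intro x hx
      rw [interior_Icc] at hx
      have hx0 : 0 < x := lt_of_lt_of_le h0 hx.1.le
      have hx1 : x < 1 := by have := hx.2; linarith
      exact (kl_hasDerivAt_G q₀ h0 hq1 hx0 hx1).differentiableAt.differentiableWithinAt
    · intro x hx
      rw [interior_Icc] at hx
      have hx0 : 0 < x := lt_of_lt_of_le h0 hx.1.le
      have hx1 : x < 1 := by have := hx.2; linarith
      rw [(kl_hasDerivAt_G q₀ h0 hq1 hx0 hx1).deriv]
      have h1x : (0:ℝ) < 1 - x := by linarith
      have hqq : (0:ℝ) < q₀ * (1 - q₀) := mul_pos h0 (by linarith)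
      have hx2 : x < 1 / 2 := hx.2
      have hxq : q₀ ≤ x := hx.1.le
      have key : x⁻¹ + (1 - x)⁻¹ ≤ (q₀ * (1 - q₀))⁻¹ := by
        have e : x⁻¹ + (1 - x)⁻¹ = (x * (1 - x))⁻¹ := by
          field_simp
          ring
        rw [e]
        apply inv_anti₀ hqq
        nlinarith [mul_nonneg (sub_nonneg.2 hxq) (by linarith : (0:ℝ) ≤ 1 - x - q₀)]
      linarith
  intro x hx
  have hq₀mem : q₀ ∈ Set.Icc q₀ (1/2 : ℝ) := ⟨le_refl _, hq⟩
  have := mono hq₀mem hx hx.1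
  have hGq : G q₀ = 0 := by simp [hG]
  rw [hGq] at this
  simp only [hG] at this
  linarith

private lemma kl_hasDerivAt_F (q₀ : ℝ) (h0 : 0 < q₀) (hq : q₀ < 1) {x : ℝ}
    (hx0 : 0 < x) (hx1 : x < 1) :
    HasDerivAt (fun y : ℝ => (y - q₀) ^ 2 / (2 * q₀ * (1 - q₀)) -
        (y * (Real.log y - Real.log q₀) + (1 - y) * (Real.log (1 - y) - Real.log (1 - q₀))))
      ((x - q₀) / (q₀ * (1 - q₀)) -
        (Real.log x - Real.log q₀ + Real.log (1 - q₀) - Real.log (1 - x))) x := by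
  have hA : HasDerivAt (fun y : ℝ => (y - q₀) ^ 2 / (2 * q₀ * (1 - q₀)))
      (2 * (x - q₀) / (2 * q₀ * (1 - q₀))) x := by
    have := (((hasDerivAt_id x).sub_const q₀).pow 2).div_const (2 * q₀ * (1 - q₀))
    refine this.congr_deriv ?_
    simp only [id_eq]
    push_cast
    ring
  have h2 : HasDerivAt Real.log x⁻¹ x := Real.hasDerivAt_log (ne_of_gt hx0)
  have hlin : HasDerivAt (fun y : ℝ => 1 - y) (-1) x := by
    exact (hasDerivAt_id' x).const_sub (1:ℝ)
  have h3 : HasDerivAt (fun y : ℝ => Real.log (1 - y)) (-(1 - x)⁻¹) x := by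
    have h1x : (1 : ℝ) - x ≠ 0 := by linarith
    have := (Real.hasDerivAt_log h1x).comp x hlin
    refine this.congr_deriv ?_
    ring
  have hB : HasDerivAt (fun y : ℝ => y * (Real.log y - Real.log q₀))
      (1 * (Real.log x - Real.log q₀) + x * x⁻¹) x :=
    (hasDerivAt_id x).mul (h2.sub_const _)
  have hC : HasDerivAt (fun y : ℝ => (1 - y) * (Real.log (1 - y) - Real.log (1 - q₀)))
      ((-1) * (Real.log (1 - x) - Real.log (1 - q₀)) + (1 - x) * (-(1 - x)⁻¹)) x :=
    hlin.mul (h3.sub_const _)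
  have total := hA.sub (hB.add hC)
  have hx' : x * x⁻¹ = 1 := mul_inv_cancel₀ (ne_of_gt hx0)
  have h1x' : (1 - x) * (-(1 - x)⁻¹) = -1 := by
    rw [mul_neg, mul_inv_cancel₀ (by linarith : (1:ℝ) - x ≠ 0)]
  rw [hx', h1x'] at total
  refine total.congr_deriv ?_
  have hq0 : q₀ ≠ 0 := ne_of_gt h0
  have hq1' : (1:ℝ) - q₀ ≠ 0 := by linarith
  field_simp
  ring

/-- On `(q₀, 1/2]`, the binary KL divergence is bounded above by its
second-order Taylor polynomial at `q₀`. -/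
theorem stmt_14 (q₀ γ : ℝ) (h0 : 0 < q₀) (h1 : q₀ ≤ γ) (h2 : γ ≤ 1 / 2) :
    γ * Real.log (γ / q₀) + (1 - γ) * Real.log ((1 - γ) / (1 - q₀)) ≤
      (γ - q₀) ^ 2 / (2 * q₀ * (1 - q₀)) := by
  have hq : q₀ ≤ 1 / 2 := le_trans h1 h2
  have hq1 : q₀ < 1 := by linarith
  have hγ0 : 0 < γ := lt_of_lt_of_le h0 h1
  have h1γ : (0:ℝ) < 1 - γ := by linarith
  have h1q : (0:ℝ) < 1 - q₀ := by linarith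
  set F : ℝ → ℝ := fun y => (y - q₀) ^ 2 / (2 * q₀ * (1 - q₀)) -
      (y * (Real.log y - Real.log q₀) + (1 - y) * (Real.log (1 - y) - Real.log (1 - q₀))) with hF
  have mono : MonotoneOn F (Set.Icc q₀ (1/2 : ℝ)) := by
    apply monotoneOn_of_deriv_nonneg (convex_Icc _ _)
    · intro x hx
      have hx0 : 0 < x := lt_of_lt_of_le h0 hx.1
      have hx1 : x < 1 := by have := hx.2; linarith
      exact (kl_hasDerivAt_F q₀ h0 hq1 hx0 hx1).continuousAt.continuousWithinAt
    · intro x hx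
      rw [interior_Icc] at hx
      have hx0 : 0 < x := lt_of_lt_of_le h0 hx.1.le
      have hx1 : x < 1 := by have := hx.2; linarith
      exact (kl_hasDerivAt_F q₀ h0 hq1 hx0 hx1).differentiableAt.differentiableWithinAt
    · intro x hx
      rw [interior_Icc] at hx
      have hx0 : 0 < x := lt_of_lt_of_le h0 hx.1.le
      have hx1 : x < 1 := by have := hx.2; linarith
      rw [(kl_hasDerivAt_F q₀ h0 hq1 hx0 hx1).deriv]
      have := kl_deriv_bound q₀ h0 hq x ⟨hx.1.le, hx.2.le⟩
      linarith
  have hmem : γ ∈ Set.Icc q₀ (1/2 : ℝ) := ⟨h1, h2⟩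
  have hq₀mem : q₀ ∈ Set.Icc q₀ (1/2 : ℝ) := ⟨le_refl _, hq⟩
  have key := mono hq₀mem hmem h1
  have hFq : F q₀ = 0 := by simp [hF]
  rw [hFq] at key
  simp only [hF] at key
  rw [Real.log_div (ne_of_gt hγ0) (ne_of_gt h0),
    Real.log_div (ne_of_gt h1γ) (ne_of_gt h1q)]
  linarith
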